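/- The clause F1 is satisfiable together with the CHC encoding of programs P1 and P2; semantically: for all integers a, b, x, y, x1, y1, x2, y2, if s11(a,b,x,y,x1,y1) and s21(a,b,x,y,x2,y2) both hold, then it is not the case that x1 ≤ x2 - 1, i.e., x1 ≥ x2. -/

import Mathlib

/-- CHC encoding of the loop of program P1. -/
inductive s12 : ℤ → ℤ → ℤ → ℤ → ℤ → ℤ → ℤ → ℤ → Prop
  | base (a b x y : ℤ) (h : a ≥ b) : s12 a b x y a b x y
  | step (a b x y a2 b2 x2 y2 : ℤ) (h : a ≤ b - 1)
      (ih : s12 (a + 1) b (x + a) (y + x + a) a2 b2 x2 y2) :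
      s12 a b x y a2 b2 x2 y2

/-- CHC encoding of the loop of program P2. -/
inductive s23 : ℤ → ℤ → ℤ → ℤ → ℤ → ℤ → ℤ → ℤ → Prop
  | base (a b x y : ℤ) (h : a ≥ b - 1) : s23 a b x y (a + 1) b x (y + x)
  | step (a b x y a2 b2 x2 y2 : ℤ) (h : a ≤ b - 2)
      (ih : s23 (a + 1) b (x + a + 1) (y + x) a2 b2 x2 y2) :
      s23 a b x y a2 b2 x2 y2

/-- CHC encoding of the body of program P2. -/
def s22 (a b x y a2 b2 x2 y2 : ℤ) : Prop :=
  (a ≥ b ∧ a2 = a ∧ b2 = b ∧ x2 = x ∧ y2 = y) ∨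
  (a ≤ b - 1 ∧ s23 a b (x + a) y a2 b2 x2 y2)

/-- Input/output relation of program P1. -/
def s11 (a b x y x2 y2 : ℤ) : Prop := ∃ a2 b2, s12 a b x y a2 b2 x2 y2

/-- Input/output relation of program P2. -/
def s21 (a b x y x2 y2 : ℤ) : Prop := ∃ a2 b2, s22 a b x y a2 b2 x2 y2

lemma sum_Ico_split (a b : ℤ) (h : a < b) :
    (∑ i ∈ Finset.Ico a b, i) = a + ∑ i ∈ Finset.Ico (a+1) b, i := by
  have : Finset.Ico (a+1) b = Finset.Ioo a b := by ext i; simp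
  rw [this, show Finset.Ico a b = insert a (Finset.Ioo a b) from (Finset.Ioo_insert_left h).symm,
    Finset.sum_insert (by simp)]

lemma s12_x (a b x y a2 b2 x2 y2 : ℤ) (h : s12 a b x y a2 b2 x2 y2) :
    x2 = x + ∑ i ∈ Finset.Ico a b, i := by
  induction h with
  | base a b x y h => rw [Finset.Ico_eq_empty (by omega)]; simp
  | step a b x y a2 b2 x2 y2 h ih hx => rw [hx, sum_Ico_split a b (by omega)]; ring

lemma s23_x (a b x y a2 b2 x2 y2 : ℤ) (h : s23 a b x y a2 b2 x2 y2) :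
    x2 = x + ∑ i ∈ Finset.Ico (a+1) b, i := by
  induction h with
  | base a b x y h => rw [Finset.Ico_eq_empty (by omega)]; simp
  | step a b x y a2 b2 x2 y2 h ih hx => rw [hx, sum_Ico_split (a+1) b (by omega)]; ring

/-- Clause F1 is satisfiable together with the CHC encoding of P1 and P2. -/
theorem F1_satisfiable (a b x y x1 y1 x2 y2 : ℤ)
    (h1 : s11 a b x y x1 y1) (h2 : s21 a b x y x2 y2) : ¬ (x1 ≤ x2 - 1) := by
  obtain ⟨a2, b2, h1⟩ := h1
  obtain ⟨a3, b3, h2⟩ := h2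
  have hx1 : x1 = x + ∑ i ∈ Finset.Ico a b, i := s12_x _ _ _ _ _ _ _ _ h1
  have hx2 : x2 = x + ∑ i ∈ Finset.Ico a b, i := by
    rcases h2 with ⟨hab, _, _, hx, _⟩ | ⟨hab, h23⟩
    · rw [hx, Finset.Ico_eq_empty (by omega)]; simp
    · have := s23_x _ _ _ _ _ _ _ _ h23
      rw [this, sum_Ico_split a b (by omega)]; ring
  omega
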